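/- For any matrix M of rank r, the max-norm satisfies ‖M‖_max ≤ √r · ‖M‖_∞, where ‖M‖_∞ is the elementwise sup-norm. -/

import Mathlib

open scoped BigOperators

/-- Maximum ℓ₂ row norm of a matrix (the ‖·‖_{2,∞} operator norm). -/
noncomputable def rowNormMax {m k : ℕ} (U : Matrix (Fin m) (Fin k) ℝ) : ℝ :=
  ⨆ i, Real.sqrt (∑ l, (U i l) ^ 2)

/-- The max-norm: infimum over factorizations M = U Vᵀ of ‖U‖_{2,∞}‖V‖_{2,∞}. -/
noncomputable def maxNorm {d1 d2 : ℕ} (M : Matrix (Fin d1) (Fin d2) ℝ) : ℝ :=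
  sInf { x | ∃ (k : ℕ) (U : Matrix (Fin d1) (Fin k) ℝ) (V : Matrix (Fin d2) (Fin k) ℝ),
    M = U * V.transpose ∧ x = rowNormMax U * rowNormMax V }

/-- Elementwise sup-norm ‖M‖_∞. -/
noncomputable def supNorm {d1 d2 : ℕ} (M : Matrix (Fin d1) (Fin d2) ℝ) : ℝ :=
  ⨆ i, ⨆ j, |M i j|

/-- Frobenius norm. -/
noncomputable def frobNorm {d1 d2 : ℕ} (M : Matrix (Fin d1) (Fin d2) ℝ) : ℝ :=
  Real.sqrt (∑ i, ∑ j, (M i j) ^ 2)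

/-- Trace norm: the sum of the singular values of M, i.e. of the square roots of the
eigenvalues of MᵀM. -/
noncomputable def traceNorm {d1 d2 : ℕ} (M : Matrix (Fin d1) (Fin d2) ℝ) : ℝ :=
  ∑ i, Real.sqrt ((Matrix.isHermitian_conjTranspose_mul_self M).eigenvalues i)

namespace MaxNormAux

open Matrix

lemma rowNormMax_nonneg {m k : ℕ} (U : Matrix (Fin m) (Fin k) ℝ) : 0 ≤ rowNormMax U :=
  Real.iSup_nonneg fun _ => Real.sqrt_nonneg _

lemma rowNormMax_zero_cols {m : ℕ} (U : Matrix (Fin m) (Fin 0) ℝ) : rowNormMax U = 0 := by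
  apply le_antisymm
  · exact Real.iSup_le (fun i => by simp) le_rfl
  · exact rowNormMax_nonneg _

lemma bddBelow_factorSet {d1 d2 : ℕ} (M : Matrix (Fin d1) (Fin d2) ℝ) :
    BddBelow { x | ∃ (k : ℕ) (U : Matrix (Fin d1) (Fin k) ℝ) (V : Matrix (Fin d2) (Fin k) ℝ),
      M = U * V.transpose ∧ x = rowNormMax U * rowNormMax V } := by
  refine ⟨0, fun x hx => ?_⟩
  obtain ⟨k, U, V, -, rfl⟩ := hx
  exact mul_nonneg (rowNormMax_nonneg U) (rowNormMax_nonneg V)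

lemma supNorm_nonneg {d1 d2 : ℕ} (M : Matrix (Fin d1) (Fin d2) ℝ) : 0 ≤ supNorm M :=
  Real.iSup_nonneg fun _ => Real.iSup_nonneg fun _ => abs_nonneg _

lemma abs_le_supNorm {d1 d2 : ℕ} (M : Matrix (Fin d1) (Fin d2) ℝ) (i : Fin d1) (j : Fin d2) :
    |M i j| ≤ supNorm M := by
  have h1 : |M i j| ≤ ⨆ j', |M i j'| :=
    le_ciSup (f := fun j' => |M i j'|) (Set.Finite.bddAbove (Set.finite_range _)) j
  exact h1.trans
    (le_ciSup (f := fun i' => ⨆ j', |M i' j'|) (Set.Finite.bddAbove (Set.finite_range _)) i)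

/-- quadratic form of `Uᵀ D U`. -/
lemma quadform {d r : ℕ} (U : Matrix (Fin d) (Fin r) ℝ) (c : Fin d → ℝ) (y : Fin r → ℝ) :
    y ⬝ᵥ ((Uᵀ * Matrix.diagonal c * U) *ᵥ y) = ∑ i, c i * ((U *ᵥ y) i) ^ 2 := by
  have h1 : (Uᵀ * Matrix.diagonal c * U) *ᵥ y
      = Uᵀ *ᵥ (Matrix.diagonal c *ᵥ (U *ᵥ y)) := by
    simp only [Matrix.mulVec_mulVec, Matrix.mul_assoc]
  rw [h1, Matrix.dotProduct_mulVec, Matrix.vecMul_transpose]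
  simp only [dotProduct, Matrix.mulVec_diagonal]
  exact Finset.sum_congr rfl fun i _ => by ring

lemma rankone {d r : ℕ} (U : Matrix (Fin d) (Fin r) ℝ) (i : Fin d) :
    Uᵀ * Matrix.diagonal (Pi.single i (1:ℝ)) * U
      = Matrix.replicateCol Unit (U i) * Matrix.replicateRow Unit (U i) := by
  ext k l
  have hrhs : (Matrix.replicateCol Unit (U i) * Matrix.replicateRow Unit (U i)) k l = U i k * U i l := by
    rw [Matrix.mul_apply]
    simp
  rw [hrhs, Matrix.mul_apply]
  simp only [Matrix.mul_diagonal, Matrix.transpose_apply]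
  rw [Finset.sum_eq_single i]
  · simp
  · intro b _ hb
    simp [Pi.single_apply, hb]
  · intro h; exact absurd (Finset.mem_univ i) h

lemma arith {r : ℕ} {s : ℝ} (hr : 1 ≤ r)
    (h : ∀ t : ℝ, 0 < t → t < 1 → (1 - t) ^ (r - 1) * (1 + t * (s - 1)) ≤ 1) :
    s ≤ r := by
  by_contra hs
  push_neg at hs
  have hr1 : (1:ℝ) ≤ (r:ℝ) := by exact_mod_cast hr
  have hs1 : (0:ℝ) < s - 1 := by linarith
  set K : ℝ := ((r:ℝ) - 1) * (s - 1) + 1 with hK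
  have hKpos : 0 < K := by nlinarith
  set t : ℝ := min (1/2) ((s - r) / K) with ht
  have ht0 : 0 < t := lt_min (by norm_num) (div_pos (by linarith) hKpos)
  have ht1 : t < 1 := lt_of_le_of_lt (min_le_left _ _) (by norm_num)
  have hcast : ((r - 1 : ℕ) : ℝ) = (r:ℝ) - 1 := by
    rw [Nat.cast_sub hr]; norm_num
  have hb : 1 - ((r:ℝ) - 1) * t ≤ (1 - t) ^ (r - 1) := by
    have h2 := one_add_mul_le_pow (a := -t) (by linarith) (r - 1)
    rw [hcast] at h2
    calc 1 - ((r:ℝ) - 1) * t = 1 + ((r:ℝ) - 1) * (-t) := by ring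
    _ ≤ (1 + -t) ^ (r - 1) := h2
    _ = (1 - t) ^ (r - 1) := by ring_nf
  have hpos : 0 < 1 + t * (s - 1) := by nlinarith
  have h2 : (1 - ((r:ℝ) - 1) * t) * (1 + t * (s - 1)) ≤ 1 :=
    le_trans (mul_le_mul_of_nonneg_right hb hpos.le) (h t ht0 ht1)
  have htK : t ≤ (s - r) / K := min_le_right _ _
  have hKt : t * K ≤ s - r := (le_div_iff₀ hKpos).mp htK
  have e1 : t * (s - r) ≤ ((r:ℝ) - 1) * (s - 1) * t ^ 2 := by nlinarith [h2]
  have e2 : ((r:ℝ) - 1) * (s - 1) * t ≤ s - r - t := by nlinarith [hKt]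
  have e3 : ((r:ℝ) - 1) * (s - 1) * t ^ 2 ≤ (s - r - t) * t := by nlinarith [e2, ht0]
  nlinarith [e1, e3, ht0]

lemma continuous_f {d r : ℕ} (U : Matrix (Fin d) (Fin r) ℝ) :
    Continuous fun c : Fin d → ℝ => (Uᵀ * Matrix.diagonal c * U).det := by
  apply Continuous.matrix_det
  apply Continuous.matrix_mul _ continuous_const
  apply Continuous.matrix_mul continuous_const
  apply continuous_matrix
  intro i j
  by_cases h : i = j
  · subst h; simpa [Matrix.diagonal] using continuous_apply i
  · simpa [Matrix.diagonal, h] using continuous_const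

lemma posDef_transpose_mul_self {d r : ℕ} (U : Matrix (Fin d) (Fin r) ℝ)
    (hU : ∀ v : Fin r → ℝ, v ≠ 0 → U *ᵥ v ≠ 0) : (Uᵀ * U).PosDef := by
  refine Matrix.PosDef.of_dotProduct_mulVec_pos (by simpa using Matrix.isHermitian_conjTranspose_mul_self U) fun x hx => ?_
  have hstar : star x = x := by funext i; simp
  have h1 : star x ⬝ᵥ ((Uᵀ * U) *ᵥ x) = (U *ᵥ x) ⬝ᵥ (U *ᵥ x) := by
    rw [hstar, ← Matrix.mulVec_mulVec, Matrix.dotProduct_mulVec, Matrix.vecMul_transpose]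
  rw [h1]
  have h2 : U *ᵥ x ≠ 0 := hU x hx
  have h3 : (U *ᵥ x) ⬝ᵥ (U *ᵥ x) ≠ 0 := fun h => h2 (dotProduct_self_eq_zero.mp h)
  have h4 : 0 ≤ (U *ᵥ x) ⬝ᵥ (U *ᵥ x) := Finset.sum_nonneg fun i _ => mul_self_nonneg _
  exact lt_of_le_of_ne h4 (Ne.symm h3)

/-- Existence of D-optimal design weights. -/
lemma exists_weights {d r : ℕ} (hd : 0 < d) (hr : 0 < r) (U : Matrix (Fin d) (Fin r) ℝ)
    (hU : ∀ v : Fin r → ℝ, v ≠ 0 → U *ᵥ v ≠ 0) :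
    ∃ c : Fin d → ℝ, (∀ i, 0 ≤ c i) ∧ (∑ i, c i) = 1 ∧
      (Uᵀ * Matrix.diagonal c * U).PosSemidef ∧
      (Uᵀ * Matrix.diagonal c * U).det ≠ 0 ∧
      ∀ i, U i ⬝ᵥ ((Uᵀ * Matrix.diagonal c * U)⁻¹ *ᵥ U i) ≤ r := by
  classical
  have hdR : ((d:ℝ)) ≠ 0 := Nat.cast_ne_zero.mpr hd.ne'
  set f : (Fin d → ℝ) → ℝ := fun c => (Uᵀ * Matrix.diagonal c * U).det with hf
  have hw : (fun _ : Fin d => (d:ℝ)⁻¹) ∈ stdSimplex ℝ (Fin d) := by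
    constructor
    · intro i; positivity
    · rw [Finset.sum_const, Finset.card_fin, nsmul_eq_mul]
      field_simp
  obtain ⟨c, hcmem, hcmax⟩ :=
    (isCompact_stdSimplex ℝ (Fin d)).exists_isMaxOn ⟨_, hw⟩ (continuous_f U).continuousOn
  obtain ⟨hc0, hc1⟩ := hcmem
  have hwpos : 0 < f (fun _ : Fin d => (d:ℝ)⁻¹) := by
    have hconst : Matrix.diagonal (fun _ : Fin d => (d:ℝ)⁻¹)
        = (d:ℝ)⁻¹ • (1 : Matrix (Fin d) (Fin d) ℝ) := by
      ext a b
      by_cases h : a = b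
      · subst h; simp [Matrix.diagonal_apply, Matrix.one_apply]
      · simp [Matrix.diagonal_apply, Matrix.one_apply, h]
    have hQw : Uᵀ * Matrix.diagonal (fun _ : Fin d => (d:ℝ)⁻¹) * U = (d:ℝ)⁻¹ • (Uᵀ * U) := by
      rw [hconst, Matrix.mul_smul, Matrix.smul_mul, Matrix.mul_one]
    rw [hf]
    simp only [hQw, Matrix.det_smul]
    apply mul_pos
    · apply pow_pos; positivity
    · exact (posDef_transpose_mul_self U hU).det_pos
  set Q := Uᵀ * Matrix.diagonal c * U with hQ
  have hQdet : 0 < Q.det := lt_of_lt_of_le hwpos (hcmax hw)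
  have hQpsd : Q.PosSemidef := by
    have hdiag : (Matrix.diagonal c).PosSemidef := Matrix.posSemidef_diagonal_iff.mpr fun i => hc0 i
    have := hdiag.conjTranspose_mul_mul_same U
    simpa using this
  have hQunit : IsUnit Q.det := isUnit_iff_ne_zero.mpr hQdet.ne'
  refine ⟨c, hc0, hc1, hQpsd, hQdet.ne', fun i => ?_⟩
  set x : Fin r → ℝ := U i with hx
  set s : ℝ := x ⬝ᵥ (Q⁻¹ *ᵥ x) with hs
  apply arith hr
  intro t ht0 ht1
  have h1t : (1:ℝ) - t ≠ 0 := by linarith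
  set ct : Fin d → ℝ := fun j => (1 - t) * c j + t * (Pi.single i 1 : Fin d → ℝ) j with hct
  have hctmem : ct ∈ stdSimplex ℝ (Fin d) := by
    constructor
    · intro j
      have hsj : (0:ℝ) ≤ (Pi.single i 1 : Fin d → ℝ) j := by
        rcases eq_or_ne j i with h | h
        · subst h; simp
        · simp [Pi.single_apply, h]
      have h1t' : (0:ℝ) ≤ 1 - t := by linarith
      exact add_nonneg (mul_nonneg h1t' (hc0 j)) (mul_nonneg ht0.le hsj)
    · simp only [hct]
      rw [Finset.sum_add_distrib, ← Finset.mul_sum, ← Finset.mul_sum, hc1,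
        Finset.sum_pi_single']
      simp
  have hmax := hcmax hctmem
  have hdiagct : Matrix.diagonal ct
      = (1 - t) • Matrix.diagonal c + t • Matrix.diagonal (Pi.single i (1:ℝ)) := by
    rw [← Matrix.diagonal_smul, ← Matrix.diagonal_smul, ← Matrix.diagonal_add]
    rfl
  set CR := Matrix.replicateCol Unit x * Matrix.replicateRow Unit x with hCR
  have hQt : Uᵀ * Matrix.diagonal ct * U = (1 - t) • Q + t • CR := by
    rw [hdiagct, Matrix.mul_add, Matrix.add_mul, hCR, ← rankone U i, hQ]
    congr 1
    · rw [Matrix.mul_smul, Matrix.smul_mul]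
    · rw [Matrix.mul_smul, Matrix.smul_mul]
  have key : Q * ((1 - t) • (1 + (t / (1 - t)) • (Q⁻¹ * CR))) = (1 - t) • Q + t • CR := by
    rw [Matrix.mul_smul, Matrix.mul_add, Matrix.mul_one, Matrix.mul_smul,
      ← Matrix.mul_assoc, Matrix.mul_nonsing_inv _ hQunit, Matrix.one_mul,
      smul_add, smul_smul, mul_comm (1-t) (t / (1-t)), div_mul_cancel₀ _ h1t]
  have hdet1 : (1 + (t / (1 - t)) • (Q⁻¹ * CR)).det = 1 + (t / (1 - t)) * s := by
    have hcol : (t / (1 - t)) • (Q⁻¹ * CR)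
        = Matrix.replicateCol Unit ((t / (1 - t)) • (Q⁻¹ *ᵥ x)) * Matrix.replicateRow Unit x := by
      rw [Matrix.replicateCol_smul, Matrix.replicateCol_mulVec, Matrix.smul_mul, hCR]
      simp only [Matrix.mul_assoc]
    rw [hcol, Matrix.det_one_add_replicateCol_mul_replicateRow]
    rw [dotProduct_smul]
    simp [hs, smul_eq_mul]
  have hfct : f ct = Q.det * ((1 - t) ^ r * (1 + (t / (1 - t)) * s)) := by
    show (Uᵀ * Matrix.diagonal ct * U).det = _
    rw [hQt, ← key, Matrix.det_mul, Matrix.det_smul, hdet1, Fintype.card_fin]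
  have hfc : f c = Q.det := rfl
  have hmax2 : f ct ≤ f c := hmax
  rw [hfct, hfc] at hmax2
  have hle : (1 - t) ^ r * (1 + (t / (1 - t)) * s) ≤ 1 := by
    by_contra hcon
    push_neg at hcon
    have := mul_lt_mul_of_pos_left hcon hQdet
    simp only [mul_one] at this
    exact absurd hmax2 (not_le.mpr this)
  have hrr : (r - 1) + 1 = r := Nat.succ_pred_eq_of_pos hr
  have hfac : (1 - t) * (1 + (t / (1 - t)) * s) = 1 + t * (s - 1) := by
    field_simp
    ring
  calc (1 - t) ^ (r - 1) * (1 + t * (s - 1))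
      = ((1 - t) ^ (r - 1) * (1 - t)) * (1 + (t / (1 - t)) * s) := by rw [← hfac]; ring
    _ = (1 - t) ^ r * (1 + (t / (1 - t)) * s) := by rw [← pow_succ, hrr]
    _ ≤ 1 := hle

/-- Rank factorization with injective left factor. -/
lemma rank_fact {d1 d2 : ℕ} (M : Matrix (Fin d1) (Fin d2) ℝ) :
    ∃ (U : Matrix (Fin d1) (Fin M.rank) ℝ) (V : Matrix (Fin d2) (Fin M.rank) ℝ),
      M = U * Vᵀ ∧ ∀ v : Fin M.rank → ℝ, v ≠ 0 → U *ᵥ v ≠ 0 := by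
  classical
  set W := LinearMap.range M.mulVecLin with hW
  have hfin : Module.finrank ℝ W = M.rank := rfl
  let b : Module.Basis (Fin M.rank) ℝ W := Module.finBasisOfFinrankEq ℝ W hfin
  have hmem : ∀ j, (fun i => M i j) ∈ W := by
    intro j
    refine ⟨Pi.single j 1, ?_⟩
    ext i
    simp [Matrix.mulVecLin_apply, Matrix.mulVec, dotProduct, Pi.single_apply]
  set colv : Fin d2 → W := fun j => ⟨fun i => M i j, hmem j⟩ with hcolv
  refine ⟨fun i l => (b l : Fin d1 → ℝ) i, fun j l => b.repr (colv j) l, ?_, ?_⟩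
  · ext i j
    have h1 := b.sum_repr (colv j)
    have h2 : ((∑ l, b.repr (colv j) l • b l : W) : Fin d1 → ℝ) i = M i j := by
      rw [h1]
    show M i j = ∑ l, (b l : Fin d1 → ℝ) i * b.repr (colv j) l
    rw [← h2]
    simp only [AddSubmonoidClass.coe_finset_sum, SetLike.val_smul, Finset.sum_apply,
      Pi.smul_apply, smul_eq_mul]
    exact Finset.sum_congr rfl fun l _ => by ring
  · intro v hv hUv
    apply hv
    have hsum : ((∑ l, v l • b l : W) : Fin d1 → ℝ) = 0 := by
      rw [← hUv]
      ext i
      simp only [AddSubmonoidClass.coe_finset_sum, SetLike.val_smul, Finset.sum_apply,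
        Pi.smul_apply, smul_eq_mul]
      simp only [Matrix.mulVec, dotProduct]
      exact Finset.sum_congr rfl fun l _ => by ring
    have hzero : (∑ l, v l • b l : W) = 0 := Subtype.ext hsum
    have hli := b.linearIndependent
    rw [Fintype.linearIndependent_iff] at hli
    ext l
    exact hli v hzero l

lemma rank_zero_eq_zero {d1 d2 : ℕ} (M : Matrix (Fin d1) (Fin d2) ℝ) (h : M.rank = 0) :
    M = 0 := by
  have hbot : LinearMap.range M.mulVecLin = ⊥ := Submodule.finrank_eq_zero.mp h
  ext i j
  have hz : M.mulVecLin (Pi.single j 1) = 0 := by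
    have hm : M.mulVecLin (Pi.single j 1) ∈ (⊥ : Submodule ℝ (Fin d1 → ℝ)) := by
      rw [← hbot]; exact LinearMap.mem_range_self _ _
    simpa using hm
  have h2 := congrFun hz i
  simpa [Matrix.mulVecLin_apply, Matrix.mulVec, dotProduct, Pi.single_apply] using h2

end MaxNormAux

open MaxNormAux Matrix MatrixOrder in
/-- ‖M‖_max ≤ √(rank M)·‖M‖_∞. -/
theorem maxNorm_le_sqrt_rank_mul_supNorm {d1 d2 : ℕ} (M : Matrix (Fin d1) (Fin d2) ℝ) :
    maxNorm M ≤ Real.sqrt (M.rank : ℝ) * supNorm M := by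
  classical
  rcases Nat.eq_zero_or_pos M.rank with h0 | hr
  · have hM : M = 0 := rank_zero_eq_zero M h0
    have hmem : (0:ℝ) ∈ { x | ∃ (k : ℕ) (U : Matrix (Fin d1) (Fin k) ℝ)
        (V : Matrix (Fin d2) (Fin k) ℝ),
        M = U * V.transpose ∧ x = rowNormMax U * rowNormMax V } := by
      refine ⟨0, 0, 0, by simp [hM], ?_⟩
      rw [rowNormMax_zero_cols, rowNormMax_zero_cols, mul_zero]
    have h1 : maxNorm M ≤ 0 := csInf_le (bddBelow_factorSet M) hmem
    have h2 : Real.sqrt (M.rank : ℝ) * supNorm M = 0 := by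
      rw [h0]; simp
    rw [maxNorm] at h1 ⊢
    rw [h2]; exact h1
  · set r := M.rank with hrdef
    have hd1 : 0 < d1 := by
      have h := Matrix.rank_le_card_height M
      simp only [Fintype.card_fin] at h
      omega
    obtain ⟨U, V, hfact, hinj⟩ := rank_fact M
    obtain ⟨c, hc0, hc1, hpsd, hdet, hsbound⟩ := exists_weights hd1 hr U hinj
    set Q := Uᵀ * Matrix.diagonal c * U with hQ
    set T := CFC.sqrt Q with hT
    have hTT : T * T = Q := CFC.sqrt_mul_sqrt_self Q hpsd.nonneg
    have hTsym : Tᵀ = T := by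
      have := (CFC.sqrt_nonneg Q).posSemidef.isHermitian
      simpa [Matrix.IsHermitian] using this
    have hdetT : T.det ≠ 0 := by
      intro h
      apply hdet
      rw [← hTT, Matrix.det_mul, h, mul_zero]
    have hTunit : IsUnit T.det := isUnit_iff_ne_zero.mpr hdetT
    have hTinv_symm : (T⁻¹)ᵀ = T⁻¹ := by
      rw [Matrix.transpose_nonsing_inv, hTsym]
    have hQinv : T⁻¹ * T⁻¹ = Q⁻¹ := by
      rw [← Matrix.mul_inv_rev, hTT]
    set U' := U * T⁻¹ with hU'
    set V' := V * T with hV'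
    have hfact' : M = U' * V'ᵀ := by
      conv_lhs => rw [hfact]
      rw [hU', hV', Matrix.transpose_mul, hTsym, Matrix.mul_assoc,
        ← Matrix.mul_assoc T⁻¹ T Vᵀ, Matrix.nonsing_inv_mul _ hTunit, Matrix.one_mul]
    have hrowU : ∀ i, ∑ l, (U' i l) ^ 2 ≤ (r:ℝ) := by
      intro i
      have hz : ∀ l, U' i l = (U i ᵥ* T⁻¹) l := by
        intro l
        simp [hU', Matrix.mul_apply, Matrix.vecMul, dotProduct]
      have hsum : ∑ l, (U' i l) ^ 2 = (U i ᵥ* T⁻¹) ⬝ᵥ (T⁻¹ *ᵥ U i) := by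
        simp only [dotProduct]
        refine Finset.sum_congr rfl fun l _ => ?_
        rw [hz l]
        have hh : (T⁻¹ *ᵥ U i) l = (U i ᵥ* T⁻¹) l := by
          conv_lhs => rw [← hTinv_symm]
          rw [Matrix.mulVec_transpose]
        rw [hh, sq]
      rw [hsum, Matrix.dotProduct_mulVec, Matrix.vecMul_vecMul, hQinv,
        ← Matrix.dotProduct_mulVec]
      exact hsbound i
    have hrowV : ∀ j, ∑ l, (V' j l) ^ 2 ≤ (supNorm M) ^ 2 := by
      intro j
      have hz : ∀ l, V' j l = (V j ᵥ* T) l := by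
        intro l
        simp [hV', Matrix.mul_apply, Matrix.vecMul, dotProduct]
      have hsum : ∑ l, (V' j l) ^ 2 = V j ⬝ᵥ (Q *ᵥ V j) := by
        have h1 : ∑ l, (V' j l) ^ 2 = (V j ᵥ* T) ⬝ᵥ (T *ᵥ V j) := by
          simp only [dotProduct]
          refine Finset.sum_congr rfl fun l _ => ?_
          rw [hz l]
          have hh : (T *ᵥ V j) l = (V j ᵥ* T) l := by
            conv_lhs => rw [← hTsym]
            rw [Matrix.mulVec_transpose]
          rw [hh, sq]
        rw [h1, Matrix.dotProduct_mulVec, Matrix.vecMul_vecMul, hTT,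
          ← Matrix.dotProduct_mulVec]
      rw [hsum, hQ, quadform]
      have hMij : ∀ i, (U *ᵥ V j) i = M i j := by
        intro i
        have hMe := congrFun (congrFun hfact i) j
        rw [hMe, Matrix.mul_apply]; simp only [Matrix.mulVec, dotProduct]
        exact Finset.sum_congr rfl fun l _ => by rw [Matrix.transpose_apply]
      calc ∑ i, c i * ((U *ᵥ V j) i) ^ 2 ≤ ∑ i, c i * (supNorm M) ^ 2 := by
            refine Finset.sum_le_sum fun i _ => ?_
            refine mul_le_mul_of_nonneg_left ?_ (hc0 i)
            rw [hMij i, ← sq_abs]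
            exact pow_le_pow_left₀ (abs_nonneg _) (abs_le_supNorm M i j) 2
        _ = (supNorm M) ^ 2 := by rw [← Finset.sum_mul, hc1, one_mul]
    have hnormU : rowNormMax U' ≤ Real.sqrt (r:ℝ) := by
      refine Real.iSup_le (fun i => ?_) (Real.sqrt_nonneg _)
      exact Real.sqrt_le_sqrt (hrowU i)
    have hnormV : rowNormMax V' ≤ supNorm M := by
      refine Real.iSup_le (fun j => ?_) (supNorm_nonneg M)
      calc Real.sqrt (∑ l, (V' j l) ^ 2) ≤ Real.sqrt ((supNorm M) ^ 2) :=
            Real.sqrt_le_sqrt (hrowV j)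
        _ = supNorm M := Real.sqrt_sq (supNorm_nonneg M)
    have hmem : rowNormMax U' * rowNormMax V' ∈ { x | ∃ (k : ℕ)
        (A : Matrix (Fin d1) (Fin k) ℝ) (B : Matrix (Fin d2) (Fin k) ℝ),
        M = A * B.transpose ∧ x = rowNormMax A * rowNormMax B } :=
      ⟨r, U', V', hfact', rfl⟩
    calc maxNorm M ≤ rowNormMax U' * rowNormMax V' := csInf_le (bddBelow_factorSet M) hmem
      _ ≤ Real.sqrt (r:ℝ) * supNorm M :=
          mul_le_mul hnormU hnormV (rowNormMax_nonneg _) (Real.sqrt_nonneg _)
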